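/- Let X ⊂ ℝ^d be a closed convex set of diameter at most D, let l_1,…,l_T be convex G-Lipschitz functions on X, and let the discount factors be constant: λ_t = λ for some λ ∈ (0,1). Consider Online Gradient Descent with the time-invariant learning rate η = D·G^{-1}·√(1−λ²): x_{t+1} = Π_X(x_t − η g_t) with g_t ∈ ∂l_t(x_t). Then for all T ≥ (1/2)·(1−λ)^{-1} and all comparators u ∈ X, the discounted regret satisfies Reg_T := Σ_{t=1}^T λ^{T−t}·[l_t(x_t) − l_t(u)] ≤ (3/2)·D·G/√(1−λ²) ≤ (3/(2√(1−e^{-1})))·D·G·√H_T. -/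

import Mathlib

set_option maxHeartbeats 1000000


open scoped BigOperators RealInnerProductSpace

/-- Constant-LR OGD with `η = D·G⁻¹·√(1−λ²)` achieves discounted regret
at most `(3/2)·D·G/√(1−λ²) ≤ (3/(2√(1−e⁻¹)))·D·G·√H_T`, for `T ≥ (1/2)(1−λ)⁻¹`. -/
theorem constant_lr_ogd_discounted_regret
    (d T : ℕ)
    (X : Set (EuclideanSpace ℝ (Fin d))) (hXclosed : IsClosed X) (hXconvex : Convex ℝ X)
    (D G : ℝ) (hD : 0 < D) (hG : 0 < G)
    (hdiam : ∀ x ∈ X, ∀ y ∈ X, ‖x - y‖ ≤ D)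
    (lam : ℝ) (hlam0 : 0 < lam) (hlam1 : lam < 1)
    (hT : (1/2) * (1 - lam)⁻¹ ≤ (T : ℝ))
    (l : ℕ → EuclideanSpace ℝ (Fin d) → ℝ)
    (hconv : ∀ t, ConvexOn ℝ X (l t))
    (x g : ℕ → EuclideanSpace ℝ (Fin d))
    (hxX : ∀ t, x t ∈ X)
    (hsub : ∀ t, ∀ y ∈ X, l t (x t) + ⟪g t, y - x t⟫ ≤ l t y)
    (hLip : ∀ t, ‖g t‖ ≤ G)
    (η : ℝ) (hη : η = D * G⁻¹ * Real.sqrt (1 - lam^2))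
    (hOGD : ∀ t, 1 ≤ t → x (t+1) ∈ X ∧
      ∀ y ∈ X, ‖x (t+1) - (x t - η • g t)‖ ≤ ‖y - (x t - η • g t)‖)
    (u : EuclideanSpace ℝ (Fin d)) (hu : u ∈ X)
    (H : ℝ) (hH : H = ∑ i ∈ Finset.Icc 1 T, lam ^ (2 * (T - i))) :
    ∑ t ∈ Finset.Icc 1 T, lam ^ (T - t) * (l t (x t) - l t u)
      ≤ (3/2) * D * G / Real.sqrt (1 - lam^2) ∧
    (3/2) * D * G / Real.sqrt (1 - lam^2)
      ≤ 3 / (2 * Real.sqrt (1 - Real.exp (-1))) * D * G * Real.sqrt H := by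
  have h1l : (0:ℝ) < 1 - lam := by linarith
  have h1l2 : (0:ℝ) < 1 - lam^2 := by nlinarith
  set s : ℝ := Real.sqrt (1 - lam^2) with hs
  have hs0 : 0 < s := Real.sqrt_pos.mpr h1l2
  have hs2 : s^2 = 1 - lam^2 := Real.sq_sqrt h1l2.le
  have hη0 : 0 < η := by rw [hη]; positivity
  have haD : ∀ t, ‖x t - u‖^2 ≤ D^2 := by
    intro t
    have h := hdiam (x t) (hxX t) u hu
    nlinarith [norm_nonneg (x t - u)]
  -- per-step inequality
  have key : ∀ t, 1 ≤ t → l t (x t) - l t u ≤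
      (‖x t - u‖^2 - ‖x (t+1) - u‖^2)/(2*η) + η*G^2/2 := by
    intro t ht
    obtain ⟨hmem, hmin⟩ := hOGD t ht
    set z : EuclideanSpace ℝ (Fin d) := x t - η • g t with hz
    set p : EuclideanSpace ℝ (Fin d) := x (t+1) with hp
    haveI : Nonempty X := ⟨⟨p, hmem⟩⟩
    have hbdd : BddBelow (Set.range fun w : X => ‖z - (w : EuclideanSpace ℝ (Fin d))‖) := by
      refine ⟨0, ?_⟩
      rintro _ ⟨w, rfl⟩
      exact norm_nonneg _
    have hiInf : ‖z - p‖ = ⨅ w : X, ‖z - w‖ := by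
      refine le_antisymm (le_ciInf fun w => ?_) (ciInf_le hbdd ⟨p, hmem⟩)
      rw [norm_sub_rev z p, norm_sub_rev z (w : EuclideanSpace ℝ (Fin d))]
      exact hmin w w.2
    have hobt : ⟪z - p, u - p⟫ ≤ 0 :=
      (norm_eq_iInf_iff_real_inner_le_zero hXconvex hmem).mp hiInf u hu
    have h1 : ‖p - u‖^2 ≤ ‖z - u‖^2 := by
      have e : z - u = (z - p) + (p - u) := by abel
      have hexp := norm_add_sq_real (z - p) (p - u)
      rw [← e] at hexp
      have hin : ⟪z - p, p - u⟫ = -⟪z - p, u - p⟫ := by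
        rw [← inner_neg_right]; congr 1; abel
      nlinarith [hexp, norm_nonneg (z - p)]
    have h2 : ‖z - u‖^2 = ‖x t - u‖^2 - 2*η*⟪g t, x t - u⟫ + η^2*‖g t‖^2 := by
      have e : z - u = (x t - u) - η • g t := by rw [hz]; abel
      rw [e, norm_sub_sq_real, real_inner_smul_right, norm_smul, Real.norm_eq_abs,
        abs_of_pos hη0, mul_pow, real_inner_comm (x t - u) (g t)]
      ring
    have hgu : l t (x t) - l t u ≤ ⟪g t, x t - u⟫ := by
      have h := hsub t u hu
      have hin : ⟪g t, u - x t⟫ = -⟪g t, x t - u⟫ := by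
        rw [← inner_neg_right]; congr 1; abel
      rw [hin] at h; linarith
    have hg2 : ‖g t‖^2 ≤ G^2 := by nlinarith [norm_nonneg (g t), hLip t]
    have hmain : 2*η*⟪g t, x t - u⟫ ≤ ‖x t - u‖^2 - ‖p - u‖^2 + η^2*G^2 := by
      nlinarith [mul_le_mul_of_nonneg_left hg2 (sq_nonneg η)]
    have hnum : (‖x t - u‖^2 - ‖p - u‖^2)/(2*η) + η*G^2/2
        = (‖x t - u‖^2 - ‖p - u‖^2 + η^2*G^2)/(2*η) := by
      field_simp
    rw [hnum, le_div_iff₀ (by positivity)]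
    nlinarith [mul_le_mul_of_nonneg_right hgu (by positivity : (0:ℝ) ≤ 2*η)]
  -- telescoping bound
  have tele : ∀ n : ℕ, ∑ t ∈ Finset.Icc 1 n, lam^(n-t) * (‖x t - u‖^2 - ‖x (t+1) - u‖^2)
      ≤ D^2 - ‖x (n+1) - u‖^2 := by
    intro n
    induction n with
    | zero => simp; linarith [haD 1]
    | succ n ih =>
      rw [Finset.sum_Icc_succ_top (by omega : 1 ≤ n + 1)]
      have hre : ∑ t ∈ Finset.Icc 1 n, lam^(n+1-t) * (‖x t - u‖^2 - ‖x (t+1) - u‖^2)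
          = lam * ∑ t ∈ Finset.Icc 1 n, lam^(n-t) * (‖x t - u‖^2 - ‖x (t+1) - u‖^2) := by
        rw [Finset.mul_sum]
        refine Finset.sum_congr rfl (fun t ht => ?_)
        obtain ⟨ht1, ht2⟩ := Finset.mem_Icc.mp ht
        have he : n + 1 - t = (n - t) + 1 := by omega
        rw [he, pow_succ]; ring
      rw [hre, Nat.sub_self, pow_zero, one_mul]
      have hmul := mul_le_mul_of_nonneg_left ih hlam0.le
      nlinarith [haD (n+1), sq_nonneg ‖x (n+2) - u‖, norm_nonneg (x (n+2) - u)]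
  -- reindexing of sums over Icc 1 T
  have hre : ∀ r : ℝ, ∑ t ∈ Finset.Icc 1 T, r^(T-t) = ∑ k ∈ Finset.range T, r^k := by
    intro r
    refine Finset.sum_nbij' (fun t => T - t) (fun k => T - k) ?_ ?_ ?_ ?_ ?_
    · intro a ha; simp only [Finset.mem_Icc] at ha; simp only [Finset.mem_range]; omega
    · intro a ha; simp only [Finset.mem_range] at ha; simp only [Finset.mem_Icc]; omega
    · intro a ha; simp only [Finset.mem_Icc] at ha; show T - (T - a) = a; omega
    · intro a ha; simp only [Finset.mem_range] at ha; show T - (T - a) = a; omega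
    · intro a _; rfl
  have hgeom : ∑ t ∈ Finset.Icc 1 T, lam^(T-t) ≤ 1/(1-lam) := by
    rw [hre lam, geom_sum_eq hlam1.ne T]
    have he : (lam^T - 1)/(lam - 1) = (1 - lam^T)/(1-lam) := by
      rw [div_eq_div_iff (by linarith) (by linarith)]; ring
    rw [he]
    gcongr
    nlinarith [pow_nonneg hlam0.le T]
  -- value of H
  have hHval : (1 - lam^2) * H = 1 - lam^(2*T) := by
    have hsum : H = ∑ k ∈ Finset.range T, (lam^2)^k := by
      rw [hH, ← hre (lam^2)]
      exact Finset.sum_congr rfl (fun i _ => pow_mul lam 2 (T - i))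
    have hne : lam^2 - 1 ≠ 0 := by nlinarith
    rw [hsum, geom_sum_eq (by nlinarith : lam^2 ≠ 1) T, pow_mul]
    field_simp [hne]
    ring
  -- first inequality
  have part1 : ∑ t ∈ Finset.Icc 1 T, lam ^ (T - t) * (l t (x t) - l t u)
      ≤ (3/2) * D * G / s := by
    have step1 : ∑ t ∈ Finset.Icc 1 T, lam ^ (T - t) * (l t (x t) - l t u)
        ≤ ∑ t ∈ Finset.Icc 1 T, ((lam^(T-t) * (‖x t - u‖^2 - ‖x (t+1) - u‖^2))/(2*η)
            + lam^(T-t) * (η*G^2/2)) := by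
      refine Finset.sum_le_sum (fun t ht => ?_)
      obtain ⟨ht1, _⟩ := Finset.mem_Icc.mp ht
      have hk := key t ht1
      have hw : (0:ℝ) ≤ lam^(T-t) := by positivity
      have := mul_le_mul_of_nonneg_left hk hw
      calc lam ^ (T - t) * (l t (x t) - l t u)
          ≤ lam ^ (T - t) * ((‖x t - u‖^2 - ‖x (t+1) - u‖^2)/(2*η) + η*G^2/2) := this
        _ = (lam^(T-t) * (‖x t - u‖^2 - ‖x (t+1) - u‖^2))/(2*η)
            + lam^(T-t) * (η*G^2/2) := by ring
    have step2 : ∑ t ∈ Finset.Icc 1 T, ((lam^(T-t) * (‖x t - u‖^2 - ‖x (t+1) - u‖^2))/(2*η)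
            + lam^(T-t) * (η*G^2/2))
        = (∑ t ∈ Finset.Icc 1 T, lam^(T-t) * (‖x t - u‖^2 - ‖x (t+1) - u‖^2))/(2*η)
            + (∑ t ∈ Finset.Icc 1 T, lam^(T-t)) * (η*G^2/2) := by
      rw [Finset.sum_add_distrib, Finset.sum_div, Finset.sum_mul]
    have step3 : (∑ t ∈ Finset.Icc 1 T, lam^(T-t) * (‖x t - u‖^2 - ‖x (t+1) - u‖^2))/(2*η)
        ≤ D^2/(2*η) := by
      have h := tele T
      have hnn : (0:ℝ) ≤ ‖x (T+1) - u‖^2 := by positivity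
      have h2η : (0:ℝ) < 2*η := by linarith
      rw [div_le_div_iff₀ h2η h2η]
      nlinarith
    have step4 : (∑ t ∈ Finset.Icc 1 T, lam^(T-t)) * (η*G^2/2) ≤ (1/(1-lam)) * (η*G^2/2) :=
      mul_le_mul_of_nonneg_right hgeom (by positivity)
    have final : D^2/(2*η) + (1/(1-lam)) * (η*G^2/2) ≤ (3/2) * D * G / s := by
      rw [hη]
      have e1 : D^2/(2*(D * G⁻¹ * s)) = D*G/(2*s) := by
        field_simp
      have e2 : (1/(1-lam)) * ((D * G⁻¹ * s)*G^2/2) = D*G*s/(2*(1-lam)) := by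
        field_simp
      rw [e1, e2]
      have h3 : D*G*s/(2*(1-lam)) ≤ D*G/s := by
        rw [div_le_div_iff₀ (by positivity) hs0]
        nlinarith [mul_nonneg (mul_pos hD hG).le (sq_nonneg (1-lam)), hs2, mul_pos hD hG]
      have e3 : (3/2)*D*G/s = D*G/(2*s) + D*G/s := by
        field_simp
        ring
      rw [e3]
      linarith
    calc ∑ t ∈ Finset.Icc 1 T, lam ^ (T - t) * (l t (x t) - l t u)
        ≤ _ := step1
      _ = _ := step2
      _ ≤ D^2/(2*η) + (1/(1-lam)) * (η*G^2/2) := add_le_add step3 step4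
      _ ≤ (3/2) * D * G / s := final
  refine ⟨part1, ?_⟩
  -- second inequality
  have hexp : lam^(2*T) ≤ Real.exp (-1) := by
    have hlog := Real.log_le_sub_one_of_pos hlam0
    have h2T : (1:ℝ) ≤ 2*T*(1-lam) := by
      have h1 := mul_le_mul_of_nonneg_right hT h1l.le
      rw [mul_assoc, inv_mul_cancel₀ h1l.ne'] at h1
      have hT0 : (0:ℝ) ≤ (T:ℝ) := Nat.cast_nonneg T
      nlinarith
    have he : lam ^ (2*T) = Real.exp ((2*T : ℕ) * Real.log lam) := by
      rw [← Real.log_pow, Real.exp_log (pow_pos hlam0 _)]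
    rw [he]
    apply Real.exp_le_exp.mpr
    push_cast
    have hT0 : (0:ℝ) ≤ 2*(T:ℝ) := by positivity
    nlinarith [mul_le_mul_of_nonneg_left hlog hT0]
  have hE1 : Real.exp (-1) < 1 := by
    rw [Real.exp_lt_one_iff]; norm_num
  set c : ℝ := Real.sqrt (1 - Real.exp (-1)) with hc
  have hc0 : 0 < c := Real.sqrt_pos.mpr (by linarith)
  have hHge : (1 - Real.exp (-1)) / (1 - lam^2) ≤ H := by
    rw [div_le_iff₀ h1l2]
    nlinarith [hHval, hexp]
  have hsH : c / s ≤ Real.sqrt H := by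
    have he : c / s = Real.sqrt ((1 - Real.exp (-1))/(1 - lam^2)) :=
      (Real.sqrt_div (by linarith) _).symm
    rw [he]
    exact Real.sqrt_le_sqrt hHge
  have e4 : 3/(2*c)*D*G*(c/s) = (3/2)*D*G/s := by
    field_simp
  calc (3/2)*D*G/s = 3/(2*c)*D*G*(c/s) := e4.symm
    _ ≤ 3/(2*c)*D*G*Real.sqrt H := by
        apply mul_le_mul_of_nonneg_left hsH
        have : (0:ℝ) < 3/(2*c) := by positivity
        positivity
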